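/- arXiv:1605.01703 — 3 statements merged into one kernel-verified Lean document; each statement's English description precedes it below -/
import Mathlib

section
/- Let n ≥ 2 and let y : Fin n → ℝ be data with nonzero total variance (∑ᵢ (yᵢ - ȳ)² ≠ 0, where ȳ = (1/n)∑ⱼ yⱼ), and let ŷ : Fin n → ℝ be any predictions. Define R² = 1 - (∑ᵢ (yᵢ - ŷᵢ)²)/(∑ᵢ (yᵢ - ȳ)²), the leave-one-out cross-validated score R²_cv = 1 - (∑ᵢ (yᵢ - ŷᵢ)²)/(∑ᵢ (yᵢ - ȳᵢ)²) with ȳᵢ = (1/(n-1))∑_{j≠i} yⱼ, and R²_naive = 1 - (n/(n-1))². Then R²_cv = (R² - R²_naive)/(1 - R²_naive). -/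
/-- For `n ≥ 2`, data `y` with nonzero total variance, and any
predictions `yhat`, the leave-one-out cross-validated score `R²_cv` equals
`(R² - R²_naive) / (1 - R²_naive)` where `R²_naive = 1 - (n/(n-1))²`. -/
theorem r2_cv_adjustment (n : ℕ) (hn : 2 ≤ n) (y yhat : Fin n → ℝ)
    (ybar : ℝ) (hybar : ybar = (1 / (n : ℝ)) * ∑ j, y j)
    (yloo : Fin n → ℝ)
    (hyloo : ∀ i, yloo i = (1 / ((n : ℝ) - 1)) * ∑ j ∈ Finset.univ.erase i, y j)
    (hB : ∑ i, (y i - ybar) ^ 2 ≠ 0) :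
    1 - (∑ i, (y i - yhat i) ^ 2) / (∑ i, (y i - yloo i) ^ 2) =
      ((1 - (∑ i, (y i - yhat i) ^ 2) / (∑ i, (y i - ybar) ^ 2))
          - (1 - ((n : ℝ) / ((n : ℝ) - 1)) ^ 2))
        / (1 - (1 - ((n : ℝ) / ((n : ℝ) - 1)) ^ 2)) := by
  have hn1 : (1:ℝ) < (n:ℝ) := by exact_mod_cast lt_of_lt_of_le one_lt_two hn
  have hn0 : (n:ℝ) ≠ 0 := by positivity
  have hnm1 : (n:ℝ) - 1 ≠ 0 := by linarith
  have key : ∀ i, y i - yloo i = ((n:ℝ) / ((n:ℝ) - 1)) * (y i - ybar) := by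
    intro i
    have hsum : ∑ j ∈ Finset.univ.erase i, y j = (∑ j, y j) - y i := by
      rw [Finset.sum_erase_eq_sub (Finset.mem_univ i)]
    rw [hyloo i, hsum, hybar]
    field_simp
    ring
  have hsq : ∑ i, (y i - yloo i) ^ 2
      = ((n:ℝ) / ((n:ℝ) - 1)) ^ 2 * ∑ i, (y i - ybar) ^ 2 := by
    rw [Finset.mul_sum]
    exact Finset.sum_congr rfl fun i _ => by rw [key i, mul_pow]
  rw [hsq]
  have hk : ((n:ℝ) / ((n:ℝ) - 1)) ^ 2 ≠ 0 := by positivity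
  field_simp
  ring
end

section
/- Let n ≥ 2 and let y : Fin n → ℝ satisfy ∑ᵢ (yᵢ - ȳ)² ≠ 0, where ȳ = (1/n)∑ⱼ yⱼ. Define the leave-one-out means ȳᵢ = (1/(n-1))∑_{j≠i} yⱼ. Then the score of the naive leave-one-out predictor, R²_naive = 1 - (∑ᵢ (yᵢ - ȳᵢ)²)/(∑ᵢ (yᵢ - ȳ)²), equals 1 - n²/(n-1)²; in particular it depends only on n, not on the data values y. -/
/-- For `n ≥ 2` and data `y` with nonzero total variance, the
R² score of the naive leave-one-out predictor equals `1 - n²/(n-1)²`,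
depending only on `n`. -/
theorem r2_naive_value (n : ℕ) (hn : 2 ≤ n) (y : Fin n → ℝ)
    (ybar : ℝ) (hybar : ybar = (1 / (n : ℝ)) * ∑ j, y j)
    (yloo : Fin n → ℝ)
    (hyloo : ∀ i, yloo i = (1 / ((n : ℝ) - 1)) * ∑ j ∈ Finset.univ.erase i, y j)
    (hB : ∑ i, (y i - ybar) ^ 2 ≠ 0) :
    1 - (∑ i, (y i - yloo i) ^ 2) / (∑ i, (y i - ybar) ^ 2) =
      1 - (n : ℝ) ^ 2 / ((n : ℝ) - 1) ^ 2 := by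
  have hn2 : (2 : ℝ) ≤ (n : ℝ) := by exact_mod_cast hn
  have hn0 : (n : ℝ) ≠ 0 := by linarith
  have hn1 : (n : ℝ) - 1 ≠ 0 := by linarith
  have hkey : ∀ i, y i - yloo i = (n : ℝ) / ((n : ℝ) - 1) * (y i - ybar) := by
    intro i
    have herase : ∑ j ∈ Finset.univ.erase i, y j = (∑ j, y j) - y i := by
      rw [Finset.sum_erase_eq_sub (Finset.mem_univ i)]
    have hsum : ∑ j, y j = (n : ℝ) * ybar := by
      rw [hybar]; field_simp
    rw [hyloo i, herase, hsum]
    field_simp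
    ring
  have hA : ∑ i, (y i - yloo i) ^ 2
      = ((n : ℝ) / ((n : ℝ) - 1)) ^ 2 * ∑ i, (y i - ybar) ^ 2 := by
    rw [Finset.mul_sum]
    exact Finset.sum_congr rfl fun i _ => by rw [hkey i]; ring
  rw [hA, mul_div_assoc, div_self hB, mul_one, div_pow]
end

section
/- Let n ≥ 2 and y : Fin n → ℝ. With ȳ = (1/n)∑ⱼ yⱼ and ȳᵢ = (1/(n-1))∑_{j≠i} yⱼ, one has ∑ᵢ (yᵢ - ȳᵢ)² = (n/(n-1))² · ∑ᵢ (yᵢ - ȳ)². -/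
/-- For `n ≥ 2` and any data `y`,
`∑ᵢ (yᵢ - ȳᵢ)² = (n/(n-1))² · ∑ᵢ (yᵢ - ȳ)²`. -/
theorem loo_sum_sq_eq (n : ℕ) (hn : 2 ≤ n) (y : Fin n → ℝ)
    (ybar : ℝ) (hybar : ybar = (1 / (n : ℝ)) * ∑ j, y j)
    (yloo : Fin n → ℝ)
    (hyloo : ∀ i, yloo i = (1 / ((n : ℝ) - 1)) * ∑ j ∈ Finset.univ.erase i, y j) :
    ∑ i, (y i - yloo i) ^ 2 =
      ((n : ℝ) / ((n : ℝ) - 1)) ^ 2 * ∑ i, (y i - ybar) ^ 2 := by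
  have hn0 : (n : ℝ) ≠ 0 := by positivity
  have hn1 : (n : ℝ) - 1 ≠ 0 := by
    have : (2 : ℝ) ≤ n := by exact_mod_cast hn
    linarith
  have key : ∀ i, y i - yloo i = ((n : ℝ) / ((n : ℝ) - 1)) * (y i - ybar) := by
    intro i
    have hsum : ∑ j ∈ Finset.univ.erase i, y j = (∑ j, y j) - y i := by
      rw [Finset.sum_erase_eq_sub (Finset.mem_univ i)]
    have hS : (∑ j, y j) = (n : ℝ) * ybar := by
      rw [hybar]; field_simp
    rw [hyloo, hsum, hS]
    field_simp
    ring
  calc ∑ i, (y i - yloo i) ^ 2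
      = ∑ i, ((n : ℝ) / ((n : ℝ) - 1)) ^ 2 * (y i - ybar) ^ 2 := by
        refine Finset.sum_congr rfl fun i _ => ?_
        rw [key i, mul_pow]
    _ = ((n : ℝ) / ((n : ℝ) - 1)) ^ 2 * ∑ i, (y i - ybar) ^ 2 := by
        rw [Finset.mul_sum]
end
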